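/- arXiv:2501.17308 — 2 statements merged into one kernel-verified Lean document; each statement's English description precedes it below -/
import Mathlib

section
/- Let A₀ : ℝ³ → ℝ and A : ℝ³ → ℝ² be twice continuously differentiable with compact support, Φ : ℝ³ → ℝ continuous, θ ∈ ℝ² a unit vector, φ : ℝ² → ℝ and h : ℝ → ℝ twice continuously differentiable, and λ ∈ ℝ. Define A⁺(x,y,t) = exp(−∫₀ᵗ (A₀(x+sθ,y) − i θ·A(x+sθ,y)) ds) and f(x,y,t) = φ(x+tθ) h(y) A⁺(x,y,t). Then f satisfies ∂ₜf − θ·∇ₓf + (A₀ − iθ·A) f = 0 pointwise, and consequently L_{𝒜,Φ}( e^{iλ(x·θ+t)} f ) = e^{iλ(x·θ+t)} · L_{𝒜,Φ} f at every point of ℝ³ × ℝ. -/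
noncomputable section
open MeasureTheory
set_option maxHeartbeats 1000000

abbrev E3 : Type := (ℝ × ℝ) × ℝ

lemma exists_fderiv_bound {g : E3 → ℂ} (hg : ContDiff ℝ 1 g) (hgc : HasCompactSupport g) :
    ∃ C : ℝ, ∀ z, ‖fderiv ℝ g z‖ ≤ C :=
  (HasCompactSupport.fderiv (𝕜 := ℝ) hgc).exists_bound_of_continuous (hg.continuous_fderiv one_ne_zero)

lemma line_hasDerivAt (c₀ v w : E3) (s a : ℝ) :
    HasDerivAt (fun a : ℝ => c₀ + a • v + s • w) v a := by
  have h1 : HasDerivAt (fun a : ℝ => a • v) v a := by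
    simpa using (hasDerivAt_id a).smul_const v
  exact (h1.const_add c₀).add_const (s • w)

lemma comp_line_hasDerivAt {g : E3 → ℂ} (hg : ContDiff ℝ 1 g) (c₀ v w : E3) (s a : ℝ) :
    HasDerivAt (fun a : ℝ => g (c₀ + a • v + s • w)) (fderiv ℝ g (c₀ + a • v + s • w) v) a :=
  ((hg.differentiable one_ne_zero _).hasFDerivAt).comp_hasDerivAt a (line_hasDerivAt c₀ v w s a)

lemma paramInt {g : E3 → ℂ} (hg : ContDiff ℝ 1 g) (hgc : HasCompactSupport g)
    (c₀ v w : E3) (t a₀ : ℝ) :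
    HasDerivAt (fun a : ℝ => ∫ s in (0:ℝ)..t, g (c₀ + a • v + s • w))
      (∫ s in (0:ℝ)..t, fderiv ℝ g (c₀ + a₀ • v + s • w) v) a₀ := by
  obtain ⟨C, hC⟩ := exists_fderiv_bound hg hgc
  have hline : ∀ a : ℝ, Continuous fun s : ℝ => c₀ + a • v + s • w := by
    intro a; exact continuous_const.add (continuous_id.smul continuous_const)
  refine (intervalIntegral.hasDerivAt_integral_of_dominated_loc_of_deriv_le
    (F := fun a s => g (c₀ + a • v + s • w))
    (F' := fun a s => fderiv ℝ g (c₀ + a • v + s • w) v)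
    (bound := fun _ => C * ‖v‖) (s := Set.univ) Filter.univ_mem ?_ ?_ ?_ ?_ ?_ ?_).2
  · exact Filter.Eventually.of_forall fun a =>
      (hg.continuous.comp (hline a)).aestronglyMeasurable
  · exact (hg.continuous.comp (hline a₀)).intervalIntegrable 0 t
  · exact (((hg.continuous_fderiv one_ne_zero).comp (hline a₀)).clm_apply
      continuous_const).aestronglyMeasurable
  · refine Filter.Eventually.of_forall fun s _ x _ => ?_
    exact ((fderiv ℝ g _).le_opNorm v).trans
      (mul_le_mul_of_nonneg_right (hC _) (norm_nonneg v))
  · exact intervalIntegrable_const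
  · exact Filter.Eventually.of_forall fun s _ x _ => comp_line_hasDerivAt hg c₀ v w s x

lemma ftc_t {g : E3 → ℂ} (hg : Continuous g) (X w : E3) (t : ℝ) :
    HasDerivAt (fun τ : ℝ => ∫ s in (0:ℝ)..τ, g (X + s • w)) (g (X + t • w)) t := by
  have hc : Continuous fun s : ℝ => g (X + s • w) :=
    hg.comp (continuous_const.add (continuous_id.smul continuous_const))
  exact intervalIntegral.integral_hasDerivAt_right (hc.intervalIntegrable 0 t)
    hc.aestronglyMeasurable.stronglyMeasurableAtFilter hc.continuousAt

lemma ftc_dir {g : E3 → ℂ} (hg : ContDiff ℝ 1 g) (X w : E3) (t : ℝ) :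
    ∫ s in (0:ℝ)..t, fderiv ℝ g (X + s • w) w = g (X + t • w) - g (X + (0:ℝ) • w) := by
  have h : ∀ s ∈ Set.uIcc (0:ℝ) t,
      HasDerivAt (fun s : ℝ => g (X + s • w)) (fderiv ℝ g (X + s • w) w) s := by
    intro s _
    have h0 := comp_line_hasDerivAt hg X w 0 0 s
    simpa using h0
  have hint : IntervalIntegrable (fun s : ℝ => fderiv ℝ g (X + s • w) w) volume 0 t := by
    refine Continuous.intervalIntegrable ?_ 0 t
    exact ((hg.continuous_fderiv one_ne_zero).comp
      (continuous_const.add (continuous_id.smul continuous_const))).clm_apply continuous_const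
  exact intervalIntegral.integral_eq_sub_of_hasDerivAt h hint

lemma gd_contDiff {g : E3 → ℂ} (hg : ContDiff ℝ 2 g) (v : E3) :
    ContDiff ℝ 1 (fun z => fderiv ℝ g z v) :=
  (hg.fderiv_right (m := 1) (by norm_num)).clm_apply contDiff_const

lemma gd_compactSupport {g : E3 → ℂ} (hgc : HasCompactSupport g) (v : E3) :
    HasCompactSupport (fun z => fderiv ℝ g z v) :=
  HasCompactSupport.fderiv_apply (𝕜 := ℝ) hgc v

/-- The amplitude profile. -/
def Wfun (g : E3 → ℂ) (w : E3) (X : E3) (t : ℝ) : ℂ := ∫ s in (0:ℝ)..t, g (X + s • w)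

def Ffun (P g : E3 → ℂ) (w : E3) (X : E3) (t : ℝ) : ℂ :=
  P (X + t • w) * Complex.exp (-Wfun g w X t)

lemma comp_lineP_hasDerivAt {P : E3 → ℂ} (hP : ContDiff ℝ 1 P) (c₀ v w : E3) (s a : ℝ) :
    HasDerivAt (fun a : ℝ => P (c₀ + a • v + s • w)) (fderiv ℝ P (c₀ + a • v + s • w) v) a :=
  ((hP.differentiable one_ne_zero _).hasFDerivAt).comp_hasDerivAt a (line_hasDerivAt c₀ v w s a)

lemma comp_lineT_hasDerivAt {P : E3 → ℂ} (hP : ContDiff ℝ 1 P) (X w : E3) (t : ℝ) :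
    HasDerivAt (fun τ : ℝ => P (X + τ • w)) (fderiv ℝ P (X + t • w) w) t := by
  have h0 := comp_lineP_hasDerivAt hP X w 0 0 t
  simpa using h0

/-- Spatial directional derivative of `Ffun`. -/
lemma HDv {P g : E3 → ℂ} (hP : ContDiff ℝ 1 P) (hg : ContDiff ℝ 1 g)
    (hgc : HasCompactSupport g) (w v X : E3) (t a₀ : ℝ) :
    HasDerivAt (fun a : ℝ => Ffun P g w (X + a • v) t)
      (fderiv ℝ P (X + a₀ • v + t • w) v * Complex.exp (-Wfun g w (X + a₀ • v) t)
        + P (X + a₀ • v + t • w) * (Complex.exp (-Wfun g w (X + a₀ • v) t)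
            * (-∫ s in (0:ℝ)..t, fderiv ℝ g (X + a₀ • v + s • w) v))) a₀ := by
  have h1 : HasDerivAt (fun a : ℝ => P (X + a • v + t • w))
      (fderiv ℝ P (X + a₀ • v + t • w) v) a₀ := comp_lineP_hasDerivAt hP X v w t a₀
  have h2 : HasDerivAt (fun a : ℝ => Complex.exp (-Wfun g w (X + a • v) t))
      (Complex.exp (-Wfun g w (X + a₀ • v) t)
        * (-∫ s in (0:ℝ)..t, fderiv ℝ g (X + a₀ • v + s • w) v)) a₀ := by
    have hw : HasDerivAt (fun a : ℝ => -Wfun g w (X + a • v) t)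
        (-∫ s in (0:ℝ)..t, fderiv ℝ g (X + a₀ • v + s • w) v) a₀ :=
      (paramInt hg hgc X v w t a₀).neg
    simpa [mul_comm] using hw.cexp
  exact h1.mul h2

/-- Time derivative of `Ffun`. -/
lemma HDt {P g : E3 → ℂ} (hP : ContDiff ℝ 1 P) (hg : ContDiff ℝ 1 g) (w X : E3) (t : ℝ) :
    HasDerivAt (fun τ : ℝ => Ffun P g w X τ)
      (fderiv ℝ P (X + t • w) w * Complex.exp (-Wfun g w X t)
        + P (X + t • w) * (Complex.exp (-Wfun g w X t) * (-g (X + t • w)))) t := by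
  have h1 : HasDerivAt (fun τ : ℝ => P (X + τ • w)) (fderiv ℝ P (X + t • w) w) t :=
    comp_lineT_hasDerivAt hP X w t
  have h2 : HasDerivAt (fun τ : ℝ => Complex.exp (-Wfun g w X τ))
      (Complex.exp (-Wfun g w X t) * (-g (X + t • w))) t := by
    have hw : HasDerivAt (fun τ : ℝ => -Wfun g w X τ) (-g (X + t • w)) t :=
      (ftc_t hg.continuous X w t).neg
    simpa [mul_comm] using hw.cexp
  exact h1.mul h2

/-- Differentiability of the spatial-derivative expression (for second derivatives). -/
lemma HDv2 {P g : E3 → ℂ} (hP : ContDiff ℝ 2 P) (hg : ContDiff ℝ 2 g)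
    (hgc : HasCompactSupport g) (w v X : E3) (t a₀ : ℝ) :
    DifferentiableAt ℝ (fun a : ℝ =>
      fderiv ℝ P (X + a • v + t • w) v * Complex.exp (-Wfun g w (X + a • v) t)
        + P (X + a • v + t • w) * (Complex.exp (-Wfun g w (X + a • v) t)
            * (-∫ s in (0:ℝ)..t, fderiv ℝ g (X + a • v + s • w) v))) a₀ := by
  have hg1 : ContDiff ℝ 1 g := hg.of_le (by norm_num)
  have hP1 : ContDiff ℝ 1 P := hP.of_le (by norm_num)
  have hPd : DifferentiableAt ℝ (fun a : ℝ => fderiv ℝ P (X + a • v + t • w) v) a₀ :=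
    (comp_lineP_hasDerivAt (gd_contDiff hP v) X v w t a₀).differentiableAt
  have hexp : DifferentiableAt ℝ (fun a : ℝ => Complex.exp (-Wfun g w (X + a • v) t)) a₀ :=
    ((paramInt hg1 hgc X v w t a₀).neg.cexp).differentiableAt
  have hPv : DifferentiableAt ℝ (fun a : ℝ => P (X + a • v + t • w)) a₀ :=
    (comp_lineP_hasDerivAt hP1 X v w t a₀).differentiableAt
  have hInt : DifferentiableAt ℝ
      (fun a : ℝ => -∫ s in (0:ℝ)..t, fderiv ℝ g (X + a • v + s • w) v) a₀ :=
    ((paramInt (gd_contDiff hg v) (gd_compactSupport hgc v) X v w t a₀).differentiableAt).neg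
  exact (hPd.mul hexp).add (hPv.mul (hexp.mul hInt))

/-- Differentiability of the time-derivative expression (for second derivatives). -/
lemma HDt2 {P g : E3 → ℂ} (hP : ContDiff ℝ 2 P) (hg : ContDiff ℝ 2 g) (w X : E3) (t : ℝ) :
    DifferentiableAt ℝ (fun τ : ℝ =>
      fderiv ℝ P (X + τ • w) w * Complex.exp (-Wfun g w X τ)
        + P (X + τ • w) * (Complex.exp (-Wfun g w X τ) * (-g (X + τ • w)))) t := by
  have hg1 : ContDiff ℝ 1 g := hg.of_le (by norm_num)
  have hP1 : ContDiff ℝ 1 P := hP.of_le (by norm_num)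
  have hPd : DifferentiableAt ℝ (fun τ : ℝ => fderiv ℝ P (X + τ • w) w) t :=
    (comp_lineT_hasDerivAt (gd_contDiff hP w) X w t).differentiableAt
  have hexp : DifferentiableAt ℝ (fun τ : ℝ => Complex.exp (-Wfun g w X τ)) t :=
    ((ftc_t hg1.continuous X w t).neg.cexp).differentiableAt
  have hPv : DifferentiableAt ℝ (fun τ : ℝ => P (X + τ • w)) t :=
    (comp_lineT_hasDerivAt hP1 X w t).differentiableAt
  have hgl : DifferentiableAt ℝ (fun τ : ℝ => -g (X + τ • w)) t :=
    ((comp_lineT_hasDerivAt hg1 X w t).differentiableAt).neg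
  exact (hPd.mul hexp).add (hPv.mul (hexp.mul hgl))

/-- First derivative of `exp(c r + d) * q r`. -/
lemma deriv_exp_mul (c d : ℂ) (q : ℝ → ℂ) (s : ℝ) (hq : DifferentiableAt ℝ q s) :
    deriv (fun r : ℝ => Complex.exp (c * r + d) * q r) s
      = Complex.exp (c * s + d) * (c * q s + deriv q s) := by
  have he : HasDerivAt (fun r : ℝ => Complex.exp (c * (r : ℂ) + d))
      (Complex.exp (c * s + d) * c) s := by
    have h1 : HasDerivAt (fun r : ℝ => c * (r : ℂ) + d) c s := by
      simpa using ((Complex.ofRealCLM.hasDerivAt (x := s)).const_mul c).add_const d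
    simpa using h1.cexp
  have : deriv (fun r : ℝ => Complex.exp (c * r + d) * q r) s = _ := (he.mul hq.hasDerivAt).deriv
  rw [this]; ring

/-- Second derivative of `exp(c r + d) * q r` (with eta-expanded outer `deriv`). -/
lemma deriv2_exp_mul (c d : ℂ) (q : ℝ → ℂ) (s : ℝ) (hq : ∀ r, DifferentiableAt ℝ q r)
    (hq2 : DifferentiableAt ℝ (deriv q) s) :
    deriv (fun r' : ℝ => deriv (fun r : ℝ => Complex.exp (c * r + d) * q r) r') s
      = Complex.exp (c * s + d)
          * (c ^ 2 * q s + 2 * c * deriv q s + deriv (deriv q) s) := by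
  have h1 : (fun r' : ℝ => deriv (fun r : ℝ => Complex.exp (c * r + d) * q r) r')
      = fun r' : ℝ => Complex.exp (c * r' + d) * ((fun r : ℝ => c * q r + deriv q r) r') := by
    funext r'; exact deriv_exp_mul c d q r' (hq r')
  rw [h1, deriv_exp_mul c d (fun r : ℝ => c * q r + deriv q r) s (((hq s).const_mul c).add hq2)]
  have h2 : deriv (fun r : ℝ => c * q r + deriv q r) s = c * deriv q s + deriv (deriv q) s := by
    rw [deriv_fun_add ((hq s).const_mul c) hq2, deriv_const_mul c (hq s)]
  rw [h2]; ring

def gf (A₀ : E3 → ℝ) (A : E3 → ℝ × ℝ) (θ : ℝ × ℝ) : E3 → ℂ :=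
  fun X => ((A₀ X : ℝ) : ℂ) - Complex.I * ((θ.1 * (A X).1 + θ.2 * (A X).2 : ℝ) : ℂ)

def Pf (φ : ℝ × ℝ → ℝ) (h : ℝ → ℝ) : E3 → ℂ :=
  fun X => ((φ X.1 : ℝ) : ℂ) * ((h X.2 : ℝ) : ℂ)

def ωv (θ : ℝ × ℝ) : E3 := ((θ.1, θ.2), 0)
def e1v : E3 := ((1, 0), 0)
def e2v : E3 := ((0, 1), 0)
def eyv : E3 := ((0, 0), 1)

lemma gf_contDiff {A₀ : E3 → ℝ} {A : E3 → ℝ × ℝ} (θ : ℝ × ℝ)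
    (hA₀ : ContDiff ℝ 2 A₀) (hA : ContDiff ℝ 2 A) : ContDiff ℝ 2 (gf A₀ A θ) := by
  refine ContDiff.sub (Complex.ofRealCLM.contDiff.comp hA₀) (ContDiff.mul contDiff_const ?_)
  exact Complex.ofRealCLM.contDiff.comp
    (((contDiff_const.mul (contDiff_fst.comp hA)).add
      (contDiff_const.mul (contDiff_snd.comp hA))))

lemma gf_compactSupport {A₀ : E3 → ℝ} {A : E3 → ℝ × ℝ} (θ : ℝ × ℝ)
    (hA₀c : HasCompactSupport A₀) (hAc : HasCompactSupport A) :
    HasCompactSupport (gf A₀ A θ) := by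
  have h1 : HasCompactSupport (fun X => ((A₀ X : ℝ) : ℂ)) :=
    hA₀c.comp_left (g := fun r : ℝ => (r : ℂ)) Complex.ofReal_zero
  have h2 : HasCompactSupport (fun X =>
      -(Complex.I * ((θ.1 * (A X).1 + θ.2 * (A X).2 : ℝ) : ℂ))) :=
    hAc.comp_left (g := fun p : ℝ × ℝ => -(Complex.I * ((θ.1 * p.1 + θ.2 * p.2 : ℝ) : ℂ)))
      (by simp)
  have h3 : gf A₀ A θ = (fun X => ((A₀ X : ℝ) : ℂ))
      + fun X => -(Complex.I * ((θ.1 * (A X).1 + θ.2 * (A X).2 : ℝ) : ℂ)) := by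
    funext X; simp [gf, sub_eq_add_neg]
  rw [h3]; exact h1.add h2

lemma Pf_contDiff {φ : ℝ × ℝ → ℝ} {h : ℝ → ℝ} (hφ : ContDiff ℝ 2 φ) (hh : ContDiff ℝ 2 h) :
    ContDiff ℝ 2 (Pf φ h) :=
  (Complex.ofRealCLM.contDiff.comp (hφ.comp contDiff_fst)).mul
    (Complex.ofRealCLM.contDiff.comp (hh.comp contDiff_snd))

lemma slice_diffs {P g : E3 → ℂ} (hP : ContDiff ℝ 2 P) (hg : ContDiff ℝ 2 g)
    (hgc : HasCompactSupport g) (w v X : E3) (t : ℝ) :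
    (∀ a, DifferentiableAt ℝ (fun a' : ℝ => Ffun P g w (X + a' • v) t) a) ∧
      ∀ a₀, DifferentiableAt ℝ (deriv (fun a' : ℝ => Ffun P g w (X + a' • v) t)) a₀ := by
  have hP1 : ContDiff ℝ 1 P := hP.of_le (by norm_num)
  have hg1 : ContDiff ℝ 1 g := hg.of_le (by norm_num)
  constructor
  · intro a; exact (HDv hP1 hg1 hgc w v X t a).differentiableAt
  · intro a₀
    have hder : deriv (fun a' : ℝ => Ffun P g w (X + a' • v) t) = fun a =>
        fderiv ℝ P (X + a • v + t • w) v * Complex.exp (-Wfun g w (X + a • v) t)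
          + P (X + a • v + t • w) * (Complex.exp (-Wfun g w (X + a • v) t)
              * (-∫ s in (0:ℝ)..t, fderiv ℝ g (X + a • v + s • w) v)) :=
      funext fun a => (HDv hP1 hg1 hgc w v X t a).deriv
    rw [hder]; exact HDv2 hP hg hgc w v X t a₀

lemma slice_diffs_t {P g : E3 → ℂ} (hP : ContDiff ℝ 2 P) (hg : ContDiff ℝ 2 g)
    (hgc : HasCompactSupport g) (w X : E3) :
    (∀ τ, DifferentiableAt ℝ (fun τ' : ℝ => Ffun P g w X τ') τ) ∧
      ∀ t, DifferentiableAt ℝ (deriv (fun τ' : ℝ => Ffun P g w X τ')) t := by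
  have hP1 : ContDiff ℝ 1 P := hP.of_le (by norm_num)
  have hg1 : ContDiff ℝ 1 g := hg.of_le (by norm_num)
  constructor
  · intro τ; exact (HDt hP1 hg1 w X τ).differentiableAt
  · intro t
    have hder : deriv (fun τ' : ℝ => Ffun P g w X τ') = fun τ =>
        fderiv ℝ P (X + τ • w) w * Complex.exp (-Wfun g w X τ)
          + P (X + τ • w) * (Complex.exp (-Wfun g w X τ) * (-g (X + τ • w))) :=
      funext fun τ => (HDt hP1 hg1 w X τ).deriv
    rw [hder]; exact HDt2 hP hg w X t

def Dt (u : (ℝ × ℝ) → ℝ → ℝ → ℂ) : (ℝ × ℝ) → ℝ → ℝ → ℂ :=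
  fun x y t => deriv (fun τ => u x y τ) t

/-- Partial derivative in the first spatial `x`-coordinate. -/
def Dx1 (u : (ℝ × ℝ) → ℝ → ℝ → ℂ) : (ℝ × ℝ) → ℝ → ℝ → ℂ :=
  fun x y t => deriv (fun a => u (a, x.2) y t) x.1

/-- Partial derivative in the second spatial `x`-coordinate. -/
def Dx2 (u : (ℝ × ℝ) → ℝ → ℝ → ℂ) : (ℝ × ℝ) → ℝ → ℝ → ℂ :=
  fun x y t => deriv (fun b => u (x.1, b) y t) x.2

/-- Partial derivative in the `y`-coordinate. -/
def Dy (u : (ℝ × ℝ) → ℝ → ℝ → ℂ) : (ℝ × ℝ) → ℝ → ℝ → ℂ :=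
  fun x y t => deriv (fun s => u x s t) y

/-- Spatial divergence (in the `x` variables) of a planar vector field on `ℝ³`. -/
def divX (A : (ℝ × ℝ) × ℝ → ℝ × ℝ) : (ℝ × ℝ) × ℝ → ℝ :=
  fun X => deriv (fun a => (A ((a, X.1.2), X.2)).1) X.1.1
         + deriv (fun b => (A ((X.1.1, b), X.2)).2) X.1.2

/-- The relativistic wave operator
`L_{𝒜,Φ} u = (∂ₜ + A₀)² u − (∇ₓ + iA)² u − ∂ᵧ² u + Φ u`, where
`(∂ₜ + A₀)² u = ∂ₜ²u + 2A₀∂ₜu + A₀²u` and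
`(∇ₓ + iA)² u = Δₓu + 2iA·∇ₓu + i(divₓA)u − |A|²u`. -/
def relWave (A₀ : (ℝ × ℝ) × ℝ → ℝ) (A : (ℝ × ℝ) × ℝ → ℝ × ℝ)
    (Φ : (ℝ × ℝ) × ℝ → ℝ) (u : (ℝ × ℝ) → ℝ → ℝ → ℂ) :
    (ℝ × ℝ) → ℝ → ℝ → ℂ :=
  fun x y t =>
    Dt (Dt u) x y t + 2 * (A₀ (x, y) : ℂ) * Dt u x y t
      + ((A₀ (x, y) : ℂ)) ^ 2 * u x y t
    - (Dx1 (Dx1 u) x y t + Dx2 (Dx2 u) x y t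
        + 2 * Complex.I * (((A (x, y)).1 : ℂ) * Dx1 u x y t
            + ((A (x, y)).2 : ℂ) * Dx2 u x y t)
        + Complex.I * (divX A (x, y) : ℂ) * u x y t
        - (((A (x, y)).1 : ℂ) ^ 2 + ((A (x, y)).2 : ℂ) ^ 2) * u x y t)
    - Dy (Dy u) x y t
    + (Φ (x, y) : ℂ) * u x y t

/-- The geometric optics ansatz `f(x,y,t) = φ(x+tθ) h(y) A⁺(x,y,t)`
satisfies the transport equation `∂ₜf − θ·∇ₓf + (A₀ − iθ·A) f = 0`, and consequently
`L_{𝒜,Φ}(e^{iλ(x·θ+t)} f) = e^{iλ(x·θ+t)} L_{𝒜,Φ} f` at every point. -/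
theorem relWave_of_plane_wave_times_ansatz
    (A₀ : (ℝ × ℝ) × ℝ → ℝ) (A : (ℝ × ℝ) × ℝ → ℝ × ℝ) (Φ : (ℝ × ℝ) × ℝ → ℝ)
    (hA₀ : ContDiff ℝ 2 A₀) (hA₀c : HasCompactSupport A₀)
    (hA : ContDiff ℝ 2 A) (hAc : HasCompactSupport A)
    (hΦ : Continuous Φ)
    (θ : ℝ × ℝ) (hθ : θ.1 ^ 2 + θ.2 ^ 2 = 1)
    (φ : ℝ × ℝ → ℝ) (h : ℝ → ℝ) (hφ : ContDiff ℝ 2 φ) (hh : ContDiff ℝ 2 h)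
    (lam : ℝ)
    (Aplus : (ℝ × ℝ) → ℝ → ℝ → ℂ)
    (hAplus : ∀ (x : ℝ × ℝ) (y t : ℝ),
      Aplus x y t = Complex.exp (-(∫ s in (0:ℝ)..t,
        ((A₀ ((x.1 + s * θ.1, x.2 + s * θ.2), y) : ℂ)
          - Complex.I * ((θ.1 * (A ((x.1 + s * θ.1, x.2 + s * θ.2), y)).1
              + θ.2 * (A ((x.1 + s * θ.1, x.2 + s * θ.2), y)).2 : ℝ) : ℂ)))))
    (f : (ℝ × ℝ) → ℝ → ℝ → ℂ)
    (hf : ∀ (x : ℝ × ℝ) (y t : ℝ),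
      f x y t = ((φ (x.1 + t * θ.1, x.2 + t * θ.2) : ℝ) : ℂ) * ((h y : ℝ) : ℂ)
        * Aplus x y t) :
    (∀ (x : ℝ × ℝ) (y t : ℝ),
      Dt f x y t - ((θ.1 : ℂ) * Dx1 f x y t + (θ.2 : ℂ) * Dx2 f x y t)
        + (((A₀ (x, y) : ℝ) : ℂ)
            - Complex.I * ((θ.1 * (A (x, y)).1 + θ.2 * (A (x, y)).2 : ℝ) : ℂ)) * f x y t
        = 0) ∧
    (∀ (x : ℝ × ℝ) (y t : ℝ),
      relWave A₀ A Φ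
          (fun x y t =>
            Complex.exp (Complex.I * (lam : ℂ) * ((x.1 * θ.1 + x.2 * θ.2 + t : ℝ) : ℂ))
              * f x y t) x y t
        = Complex.exp (Complex.I * (lam : ℂ) * ((x.1 * θ.1 + x.2 * θ.2 + t : ℝ) : ℂ))
            * relWave A₀ A Φ f x y t) := by
  classical
  -- abbreviations
  have hg2 : ContDiff ℝ 2 (gf A₀ A θ) := gf_contDiff θ hA₀ hA
  have hg1 : ContDiff ℝ 1 (gf A₀ A θ) := hg2.of_le (by norm_num)
  have hgc : HasCompactSupport (gf A₀ A θ) := gf_compactSupport θ hA₀c hAc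
  have hP2 : ContDiff ℝ 2 (Pf φ h) := Pf_contDiff hφ hh
  have hP1 : ContDiff ℝ 1 (Pf φ h) := hP2.of_le (by norm_num)
  have hadd : ∀ (p : ℝ × ℝ) (y s : ℝ),
      ((p, y) : E3) + s • ωv θ = ((p.1 + s * θ.1, p.2 + s * θ.2), y) := by
    intro p y s
    simp [ωv, Prod.ext_iff, smul_eq_mul, mul_comm]
  have hfF : ∀ (x : ℝ × ℝ) (y t : ℝ),
      f x y t = Ffun (Pf φ h) (gf A₀ A θ) (ωv θ) (x, y) t := by
    intro x y t
    rw [hf, hAplus]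
    unfold Ffun Wfun
    simp only [hadd]
    rfl
  -- the transport equation
  have trans : ∀ (x : ℝ × ℝ) (y t : ℝ),
      Dt f x y t - ((θ.1 : ℂ) * Dx1 f x y t + (θ.2 : ℂ) * Dx2 f x y t)
        + (((A₀ (x, y) : ℝ) : ℂ)
            - Complex.I * ((θ.1 * (A (x, y)).1 + θ.2 * (A (x, y)).2 : ℝ) : ℂ)) * f x y t
        = 0 := by
    intro x y t
    have hX1 : (((0 : ℝ), x.2), y) + x.1 • e1v = ((x, y) : E3) := by
      simp [e1v, Prod.ext_iff, smul_eq_mul]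
    have hX2 : ((x.1, (0 : ℝ)), y) + x.2 • e2v = ((x, y) : E3) := by
      simp [e2v, Prod.ext_iff, smul_eq_mul]
    have hDtv : Dt f x y t
        = fderiv ℝ (Pf φ h) ((x, y) + t • ωv θ) (ωv θ)
            * Complex.exp (-Wfun (gf A₀ A θ) (ωv θ) (x, y) t)
          + Pf φ h ((x, y) + t • ωv θ)
            * (Complex.exp (-Wfun (gf A₀ A θ) (ωv θ) (x, y) t)
                * (-(gf A₀ A θ) ((x, y) + t • ωv θ))) := by
      have h1 : (fun τ => f x y τ) = fun τ => Ffun (Pf φ h) (gf A₀ A θ) (ωv θ) (x, y) τ :=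
        funext fun τ => hfF x y τ
      simp only [Dt]; rw [h1]
      exact (HDt hP1 hg1 (ωv θ) (x, y) t).deriv
    have hDx1v : Dx1 f x y t
        = fderiv ℝ (Pf φ h) ((x, y) + t • ωv θ) e1v
            * Complex.exp (-Wfun (gf A₀ A θ) (ωv θ) (x, y) t)
          + Pf φ h ((x, y) + t • ωv θ)
            * (Complex.exp (-Wfun (gf A₀ A θ) (ωv θ) (x, y) t)
                * (-∫ s in (0:ℝ)..t, fderiv ℝ (gf A₀ A θ) ((x, y) + s • ωv θ) e1v)) := by
      have h1 : (fun a => f (a, x.2) y t)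
          = fun a => Ffun (Pf φ h) (gf A₀ A θ) (ωv θ) ((((0 : ℝ), x.2), y) + a • e1v) t := by
        funext a
        rw [hfF]
        congr 1
        simp [e1v, Prod.ext_iff, smul_eq_mul]
      simp only [Dx1]; rw [h1, (HDv hP1 hg1 hgc (ωv θ) e1v (((0 : ℝ), x.2), y) t x.1).deriv]
      simp only [hX1]
    have hDx2v : Dx2 f x y t
        = fderiv ℝ (Pf φ h) ((x, y) + t • ωv θ) e2v
            * Complex.exp (-Wfun (gf A₀ A θ) (ωv θ) (x, y) t)
          + Pf φ h ((x, y) + t • ωv θ)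
            * (Complex.exp (-Wfun (gf A₀ A θ) (ωv θ) (x, y) t)
                * (-∫ s in (0:ℝ)..t, fderiv ℝ (gf A₀ A θ) ((x, y) + s • ωv θ) e2v)) := by
      have h1 : (fun b => f (x.1, b) y t)
          = fun b => Ffun (Pf φ h) (gf A₀ A θ) (ωv θ) (((x.1, (0 : ℝ)), y) + b • e2v) t := by
        funext b
        rw [hfF]
        congr 1
        simp [e2v, Prod.ext_iff, smul_eq_mul]
      simp only [Dx2]; rw [h1, (HDv hP1 hg1 hgc (ωv θ) e2v ((x.1, (0 : ℝ)), y) t x.2).deriv]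
      simp only [hX2]
    have hf0 : f x y t = Pf φ h ((x, y) + t • ωv θ)
        * Complex.exp (-Wfun (gf A₀ A θ) (ωv θ) (x, y) t) := hfF x y t
    have hω : ωv θ = θ.1 • e1v + θ.2 • e2v := by
      simp [ωv, e1v, e2v, Prod.ext_iff]
    have hPd : fderiv ℝ (Pf φ h) ((x, y) + t • ωv θ) (ωv θ)
        = (θ.1 : ℂ) * fderiv ℝ (Pf φ h) ((x, y) + t • ωv θ) e1v
          + (θ.2 : ℂ) * fderiv ℝ (Pf φ h) ((x, y) + t • ωv θ) e2v := by
      rw [hω, map_add]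
      simp [Complex.real_smul]
    have hgd : ∀ Y : E3, fderiv ℝ (gf A₀ A θ) Y (ωv θ)
        = (θ.1 : ℂ) * fderiv ℝ (gf A₀ A θ) Y e1v
          + (θ.2 : ℂ) * fderiv ℝ (gf A₀ A θ) Y e2v := by
      intro Y
      rw [hω, map_add]
      simp [Complex.real_smul]
    have hcont : ∀ v : E3, Continuous fun s : ℝ =>
        fderiv ℝ (gf A₀ A θ) ((x, y) + s • ωv θ) v := by
      intro v
      exact ((hg1.continuous_fderiv one_ne_zero).comp
        (continuous_const.add (continuous_id.smul continuous_const))).clm_apply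
        continuous_const
    have hIsum : (θ.1 : ℂ) * (∫ s in (0:ℝ)..t, fderiv ℝ (gf A₀ A θ) ((x, y) + s • ωv θ) e1v)
          + (θ.2 : ℂ) * (∫ s in (0:ℝ)..t, fderiv ℝ (gf A₀ A θ) ((x, y) + s • ωv θ) e2v)
        = gf A₀ A θ ((x, y) + t • ωv θ) - gf A₀ A θ (x, y) := by
      have hi1 : IntervalIntegrable
          (fun s : ℝ => θ.1 • fderiv ℝ (gf A₀ A θ) ((x, y) + s • ωv θ) e1v) volume 0 t :=
        ((hcont e1v).const_smul θ.1).intervalIntegrable 0 t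
      have hi2 : IntervalIntegrable
          (fun s : ℝ => θ.2 • fderiv ℝ (gf A₀ A θ) ((x, y) + s • ωv θ) e2v) volume 0 t :=
        ((hcont e2v).const_smul θ.2).intervalIntegrable 0 t
      rw [← Complex.real_smul, ← Complex.real_smul, ← intervalIntegral.integral_smul,
        ← intervalIntegral.integral_smul, ← intervalIntegral.integral_add hi1 hi2]
      have : ∀ s : ℝ, θ.1 • fderiv ℝ (gf A₀ A θ) ((x, y) + s • ωv θ) e1v
          + θ.2 • fderiv ℝ (gf A₀ A θ) ((x, y) + s • ωv θ) e2v
          = fderiv ℝ (gf A₀ A θ) ((x, y) + s • ωv θ) (ωv θ) := by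
        intro s
        rw [hgd]
        simp [Complex.real_smul]
      simp only [this]
      have := ftc_dir hg1 ((x, y) : E3) (ωv θ) t
      simpa using this
    rw [hDtv, hDx1v, hDx2v, hf0]
    have hco : (((A₀ (x, y) : ℝ) : ℂ)
        - Complex.I * ((θ.1 * (A (x, y)).1 + θ.2 * (A (x, y)).2 : ℝ) : ℂ))
        = gf A₀ A θ (x, y) := rfl
    rw [hco]
    linear_combination Complex.exp (-Wfun (gf A₀ A θ) (ωv θ) (x, y) t) * hPd
      + (Pf φ h ((x, y) + t • ωv θ)
          * Complex.exp (-Wfun (gf A₀ A θ) (ωv θ) (x, y) t)) * hIsum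
  refine ⟨trans, ?_⟩
  intro x y t
  have hg1' : ContDiff ℝ 1 (gf A₀ A θ) := hg1
  -- differentiability of the four slices of f and of their derivatives
  have hfun_t : (fun τ' : ℝ => f x y τ') = fun τ' : ℝ => Ffun (Pf φ h) (gf A₀ A θ) (ωv θ) (x, y) τ' :=
    funext fun τ' => hfF x y τ'
  have hdt := slice_diffs_t hP2 hg2 hgc (ωv θ) ((x, y) : E3)
  have hq_t : ∀ τ, DifferentiableAt ℝ (fun τ' : ℝ => f x y τ') τ := by
    rw [hfun_t]; exact hdt.1
  have hq_t2 : DifferentiableAt ℝ (deriv (fun τ' : ℝ => f x y τ')) t := by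
    rw [hfun_t]; exact hdt.2 t
  have hfun_1 : (fun a : ℝ => f (a, x.2) y t)
      = fun a : ℝ => Ffun (Pf φ h) (gf A₀ A θ) (ωv θ) ((((0 : ℝ), x.2), y) + a • e1v) t := by
    funext a; rw [hfF]; congr 1; simp [e1v, Prod.ext_iff, smul_eq_mul]
  have hd1 := slice_diffs hP2 hg2 hgc (ωv θ) e1v (((0 : ℝ), x.2), y) t
  have hq_1 : ∀ a, DifferentiableAt ℝ (fun a' : ℝ => f (a', x.2) y t) a := by
    rw [hfun_1]; exact hd1.1
  have hq_12 : DifferentiableAt ℝ (deriv (fun a' : ℝ => f (a', x.2) y t)) x.1 := by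
    rw [hfun_1]; exact hd1.2 x.1
  have hfun_2 : (fun b : ℝ => f (x.1, b) y t)
      = fun b : ℝ => Ffun (Pf φ h) (gf A₀ A θ) (ωv θ) (((x.1, (0 : ℝ)), y) + b • e2v) t := by
    funext b; rw [hfF]; congr 1; simp [e2v, Prod.ext_iff, smul_eq_mul]
  have hd2 := slice_diffs hP2 hg2 hgc (ωv θ) e2v ((x.1, (0 : ℝ)), y) t
  have hq_2 : ∀ b, DifferentiableAt ℝ (fun b' : ℝ => f (x.1, b') y t) b := by
    rw [hfun_2]; exact hd2.1
  have hq_22 : DifferentiableAt ℝ (deriv (fun b' : ℝ => f (x.1, b') y t)) x.2 := by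
    rw [hfun_2]; exact hd2.2 x.2
  have hfun_y : (fun s : ℝ => f x s t)
      = fun s : ℝ => Ffun (Pf φ h) (gf A₀ A θ) (ωv θ) (((x, (0 : ℝ)) : E3) + s • eyv) t := by
    funext s; rw [hfF]; congr 1; simp [eyv, Prod.ext_iff, smul_eq_mul]
  have hdy := slice_diffs hP2 hg2 hgc (ωv θ) eyv ((x, (0 : ℝ)) : E3) t
  have hq_y : ∀ s, DifferentiableAt ℝ (fun s' : ℝ => f x s' t) s := by
    rw [hfun_y]; exact hdy.1
  have hq_y2 : DifferentiableAt ℝ (deriv (fun s' : ℝ => f x s' t)) y := by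
    rw [hfun_y]; exact hdy.2 y
  simp only [relWave, Dt, Dx1, Dx2, Dy]
  have e_t : (fun τ : ℝ => Complex.exp (Complex.I * (lam : ℂ) * ((x.1 * θ.1 + x.2 * θ.2 + τ : ℝ) : ℂ)) * f x y τ)
      = fun τ : ℝ => Complex.exp ((Complex.I * (lam : ℂ)) * (τ : ℂ)
          + Complex.I * (lam : ℂ) * ((x.1 : ℂ) * (θ.1 : ℂ) + (x.2 : ℂ) * (θ.2 : ℂ))) * f x y τ := by
    funext τ
    congr 2
    push_cast
    ring
  have e_1 : (fun a : ℝ => Complex.exp (Complex.I * (lam : ℂ) * ((a * θ.1 + x.2 * θ.2 + t : ℝ) : ℂ)) * f (a, x.2) y t)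
      = fun a : ℝ => Complex.exp ((Complex.I * (lam : ℂ) * (θ.1 : ℂ)) * (a : ℂ)
          + Complex.I * (lam : ℂ) * ((x.2 : ℂ) * (θ.2 : ℂ) + (t : ℂ))) * f (a, x.2) y t := by
    funext a
    congr 2
    push_cast
    ring
  have e_2 : (fun b : ℝ => Complex.exp (Complex.I * (lam : ℂ) * ((x.1 * θ.1 + b * θ.2 + t : ℝ) : ℂ)) * f (x.1, b) y t)
      = fun b : ℝ => Complex.exp ((Complex.I * (lam : ℂ) * (θ.2 : ℂ)) * (b : ℂ)
          + Complex.I * (lam : ℂ) * ((x.1 : ℂ) * (θ.1 : ℂ) + (t : ℂ))) * f (x.1, b) y t := by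
    funext b
    congr 2
    push_cast
    ring
  have e_y : (fun s : ℝ => Complex.exp (Complex.I * (lam : ℂ) * ((x.1 * θ.1 + x.2 * θ.2 + t : ℝ) : ℂ)) * f x s t)
      = fun s : ℝ => Complex.exp ((0 : ℂ) * (s : ℂ)
          + Complex.I * (lam : ℂ) * ((x.1 * θ.1 + x.2 * θ.2 + t : ℝ) : ℂ)) * f x s t := by
    funext s
    congr 2
    ring
  have hex_t : Complex.exp ((Complex.I * (lam : ℂ)) * (t : ℂ)
        + Complex.I * (lam : ℂ) * ((x.1 : ℂ) * (θ.1 : ℂ) + (x.2 : ℂ) * (θ.2 : ℂ)))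
      = Complex.exp (Complex.I * (lam : ℂ) * ((x.1 * θ.1 + x.2 * θ.2 + t : ℝ) : ℂ)) := by
    congr 1; push_cast; ring
  have hex_1 : Complex.exp ((Complex.I * (lam : ℂ) * (θ.1 : ℂ)) * ((x.1 : ℝ) : ℂ)
        + Complex.I * (lam : ℂ) * ((x.2 : ℂ) * (θ.2 : ℂ) + (t : ℂ)))
      = Complex.exp (Complex.I * (lam : ℂ) * ((x.1 * θ.1 + x.2 * θ.2 + t : ℝ) : ℂ)) := by
    congr 1; push_cast; ring
  have hex_2 : Complex.exp ((Complex.I * (lam : ℂ) * (θ.2 : ℂ)) * ((x.2 : ℝ) : ℂ)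
        + Complex.I * (lam : ℂ) * ((x.1 : ℂ) * (θ.1 : ℂ) + (t : ℂ)))
      = Complex.exp (Complex.I * (lam : ℂ) * ((x.1 * θ.1 + x.2 * θ.2 + t : ℝ) : ℂ)) := by
    congr 1; push_cast; ring
  have hex_y : Complex.exp ((0 : ℂ) * ((y : ℝ) : ℂ)
        + Complex.I * (lam : ℂ) * ((x.1 * θ.1 + x.2 * θ.2 + t : ℝ) : ℂ))
      = Complex.exp (Complex.I * (lam : ℂ) * ((x.1 * θ.1 + x.2 * θ.2 + t : ℝ) : ℂ)) := by
    congr 1; ring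
  rw [e_t, e_1, e_2, e_y,
    deriv2_exp_mul _ _ _ t hq_t hq_t2,
    deriv_exp_mul _ _ _ t (hq_t t),
    deriv2_exp_mul _ _ _ x.1 hq_1 hq_12,
    deriv_exp_mul _ _ _ x.1 (hq_1 x.1),
    deriv2_exp_mul _ _ _ x.2 hq_2 hq_22,
    deriv_exp_mul _ _ _ x.2 (hq_2 x.2),
    deriv2_exp_mul _ _ _ y hq_y hq_y2,
    hex_t, hex_1, hex_2, hex_y]
  have hθc : ((θ.1 : ℂ)) ^ 2 + ((θ.2 : ℂ)) ^ 2 = 1 := by exact_mod_cast hθ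
  have htr := trans x y t
  simp only [Dt, Dx1, Dx2] at htr
  push_cast at htr ⊢
  linear_combination (2 * (Complex.I * (lam : ℂ))
      * Complex.exp (Complex.I * (lam : ℂ) * ((x.1 : ℂ) * (θ.1 : ℂ) + (x.2 : ℂ) * (θ.2 : ℂ) + (t : ℂ)))) * htr
    - ((Complex.I * (lam : ℂ)) ^ 2
      * Complex.exp (Complex.I * (lam : ℂ) * ((x.1 : ℂ) * (θ.1 : ℂ) + (x.2 : ℂ) * (θ.2 : ℂ) + (t : ℂ)))
      * f x y t) * hθc
end
end

section
/- Let f : ℝ² → ℂ be integrable, let θ = (θ₁,θ₂) ∈ ℝ² be a unit vector with perpendicular θ^⊥ = (−θ₂,θ₁), and let ξ ∈ ℝ² satisfy θ·ξ = 0. Then the function s ↦ f(ρθ^⊥ − sθ) is integrable for almost every ρ ∈ ℝ, and ∫_{ℝ²} e^{−i x·ξ} f(x) dx = ∫_ℝ e^{−i ρ (θ^⊥·ξ)} ( ∫_ℝ f(ρθ^⊥ − sθ) ds ) dρ. -/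
noncomputable section

open MeasureTheory

/-- For integrable `f : ℝ² → ℂ`, a unit vector `θ` with perpendicular
`θ^⊥ = (−θ₂, θ₁)` and `ξ ⊥ θ`, the function `s ↦ f(ρθ^⊥ − sθ)` is integrable for a.e.
`ρ ∈ ℝ` and
`∫_{ℝ²} e^{−i x·ξ} f(x) dx = ∫_ℝ e^{−iρ(θ^⊥·ξ)} (∫_ℝ f(ρθ^⊥ − sθ) ds) dρ`. -/
theorem fourier_transform_via_radon_transform
    (f : ℝ × ℝ → ℂ) (hf : MeasureTheory.Integrable f)
    (θ : ℝ × ℝ) (hθ : θ.1 ^ 2 + θ.2 ^ 2 = 1)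
    (ξ : ℝ × ℝ) (hξ : θ.1 * ξ.1 + θ.2 * ξ.2 = 0) :
    (∀ᵐ ρ ∂(volume : Measure ℝ),
      MeasureTheory.Integrable
        (fun s : ℝ => f (ρ * (-θ.2) - s * θ.1, ρ * θ.1 - s * θ.2))) ∧
    (∫ x : ℝ × ℝ, Complex.exp (-Complex.I * ((x.1 * ξ.1 + x.2 * ξ.2 : ℝ) : ℂ)) * f x
      = ∫ ρ : ℝ,
          Complex.exp (-Complex.I * ((ρ * ((-θ.2) * ξ.1 + θ.1 * ξ.2) : ℝ) : ℂ))
            * ∫ s : ℝ, f (ρ * (-θ.2) - s * θ.1, ρ * θ.1 - s * θ.2)) := by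
  -- the linear change of variables
  set T : (ℝ × ℝ) ≃ₗ[ℝ] ℝ × ℝ :=
    { toFun := fun p => (p.1 * (-θ.2) - p.2 * θ.1, p.1 * θ.1 - p.2 * θ.2)
      invFun := fun q => (-θ.2 * q.1 + θ.1 * q.2, -θ.1 * q.1 - θ.2 * q.2)
      map_add' := by intro p q; simp; constructor <;> ring
      map_smul' := by intro c p; simp; constructor <;> ring
      left_inv := by
        intro p; simp only []; refine Prod.ext ?_ ?_ <;> simp
        · linear_combination p.1 * hθ
        · linear_combination p.2 * hθ
      right_inv := by
        intro q; simp only []; refine Prod.ext ?_ ?_ <;> simp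
        · linear_combination q.1 * hθ
        · linear_combination q.2 * hθ } with hTdef
  have hTcont : Continuous T := LinearMap.continuous_of_finiteDimensional T.toLinearMap
  have hTcont' : Continuous T.symm := LinearMap.continuous_of_finiteDimensional T.symm.toLinearMap
  have hTmeas : Measurable T := hTcont.measurable
  have hdet : LinearMap.det (T.toLinearMap) = 1 := by
    have b := Module.Basis.finTwoProd ℝ
    rw [← LinearMap.det_toMatrix (Module.Basis.finTwoProd ℝ)]
    rw [Matrix.det_fin_two]
    simp [LinearMap.toMatrix_apply, Module.Basis.finTwoProd, hTdef]
    linear_combination hθ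
  have hTmp : MeasurePreserving T (volume : Measure (ℝ × ℝ)) volume := by
    refine ⟨hTmeas, ?_⟩
    have h := MeasureTheory.Measure.map_linearMap_addHaar_eq_smul_addHaar
      (volume : Measure (ℝ × ℝ)) (f := T.toLinearMap) (by rw [hdet]; norm_num)
    rw [hdet] at h
    simp only [abs_one, inv_one, ENNReal.ofReal_one, one_smul, LinearEquiv.coe_coe] at h
    exact h
  have hTemb : MeasurableEmbedding T := by
    have : MeasurableEmbedding (T.toEquiv) :=
      MeasurableEquiv.measurableEmbedding
        { toEquiv := T.toEquiv, measurable_toFun := hTmeas,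
          measurable_invFun := hTcont'.measurable }
    exact this
  -- the phase function
  set F : ℝ × ℝ → ℂ :=
    fun x => Complex.exp (-Complex.I * ((x.1 * ξ.1 + x.2 * ξ.2 : ℝ) : ℂ)) * f x with hFdef
  have hphase : ∀ x : ℝ × ℝ, ‖Complex.exp (-Complex.I * ((x.1 * ξ.1 + x.2 * ξ.2 : ℝ) : ℂ))‖ = 1 := by
    intro x
    rw [show -Complex.I * ((x.1 * ξ.1 + x.2 * ξ.2 : ℝ) : ℂ)
        = Complex.I * ((-(x.1 * ξ.1 + x.2 * ξ.2) : ℝ) : ℂ) by push_cast; ring]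
    rw [mul_comm]
    exact Complex.norm_exp_ofReal_mul_I _
  have hF : Integrable F := by
    apply Integrable.bdd_mul (c := 1) hf
    · exact (Complex.continuous_exp.comp (by continuity)).aestronglyMeasurable
    · exact Filter.Eventually.of_forall fun x => le_of_eq (hphase x)
  -- composed with T
  have hfT : Integrable (fun p : ℝ × ℝ => f (T p)) := (hTmp.integrable_comp_emb hTemb).2 hf
  have hFT : Integrable (fun p : ℝ × ℝ => F (T p)) := (hTmp.integrable_comp_emb hTemb).2 hF
  have hTapp : ∀ p : ℝ × ℝ, T p = (p.1 * (-θ.2) - p.2 * θ.1, p.1 * θ.1 - p.2 * θ.2) :=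
    fun p => rfl
  have hkey : ∀ p : ℝ × ℝ,
      F (T p) = Complex.exp (-Complex.I * ((p.1 * ((-θ.2) * ξ.1 + θ.1 * ξ.2) : ℝ) : ℂ))
        * f (p.1 * (-θ.2) - p.2 * θ.1, p.1 * θ.1 - p.2 * θ.2) := by
    intro p
    have h2 : ((p.1 * (-θ.2) - p.2 * θ.1) * ξ.1 + (p.1 * θ.1 - p.2 * θ.2) * ξ.2)
        = p.1 * ((-θ.2) * ξ.1 + θ.1 * ξ.2) := by linear_combination (-p.2) * hξ
    rw [hFdef]
    simp only [hTapp p]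
    rw [h2]
  rw [show (volume : Measure (ℝ × ℝ)) = (volume : Measure ℝ).prod volume from
    MeasureTheory.Measure.volume_eq_prod ℝ ℝ ] at hfT hFT
  constructor
  · filter_upwards [hfT.prod_right_ae] with ρ hρ
    simpa only [hTapp] using hρ
  · have h1 : (∫ x : ℝ × ℝ, F x) = ∫ p : ℝ × ℝ, F (T p) :=
      (hTmp.integral_comp hTemb F).symm
    rw [hFdef] at h1
    rw [h1]
    rw [show (volume : Measure (ℝ × ℝ)) = (volume : Measure ℝ).prod volume from
      MeasureTheory.Measure.volume_eq_prod ℝ ℝ ]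
    rw [MeasureTheory.integral_prod _ hFT]
    refine integral_congr_ae (Filter.Eventually.of_forall fun ρ => ?_)
    simp only [hkey]
    rw [MeasureTheory.integral_const_mul]
end
end
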